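/- Let n have binary expansion n = 2^{j₁} + ... + 2^{j_k}, let S ⊆ [n-1], and let i ∈ [n-1] \ S be nonessential (not a sum of a nonempty proper subset of {2^{j₁},...,2^{j_k}}). Then β_n(S) ≡ β_n(S ∪ {i}) (mod 2), where β_n denotes the descent set statistic. -/

import Mathlib

open Finset

/-- The descent set of a permutation of `{1,…,n}` (written as a permutation of `Fin n`),
as a subset of `[n-1] = {1,…,n-1}`: `i` is a descent if `π_i > π_{i+1}` (1-indexed). -/
def descSet (n : ℕ) (π : Equiv.Perm (Fin n)) : Finset ℕ :=
  (Finset.Icc 1 (n - 1)).filter (fun i =>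
    ∃ h : i < n, π ⟨i, h⟩ < π ⟨i - 1, by omega⟩)

/-- `β_n(S)`: the number of permutations of `{1,…,n}` with descent set exactly `S`. -/
def descBeta (n : ℕ) (S : Finset ℕ) : ℕ :=
  (Finset.univ.filter (fun π : Equiv.Perm (Fin n) => descSet n π = S)).card

/-- `α_n(S)`: the number of permutations of `{1,…,n}` with descent set contained in `S`. -/
def descAlpha (n : ℕ) (S : Finset ℕ) : ℕ :=
  (Finset.univ.filter (fun π : Equiv.Perm (Fin n) => descSet n π ⊆ S)).card

def Essential (n s : ℕ) : Prop := 0 < s ∧ s < n ∧ s &&& n = s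


lemma kummer_aux : ∀ n k : ℕ, Odd (Nat.choose n k) → ∀ j, k.testBit j = true → n.testBit j = true := by
  intro n
  induction n using Nat.strong_induction_on with
  | _ n ih =>
    intro k hodd j hbit
    rcases Nat.eq_zero_or_pos n with h0 | hpos
    · subst h0
      have : k = 0 := by
        by_contra hk
        simp [Nat.choose_eq_zero_of_lt (Nat.pos_of_ne_zero hk)] at hodd
      subst this; simp at hbit
    · have key : Nat.choose n k ≡ Nat.choose (n % 2) (k % 2) * Nat.choose (n / 2) (k / 2) [MOD 2] := by
        have : Fact (Nat.Prime 2) := ⟨Nat.prime_two⟩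
        exact Choose.choose_modEq_choose_mod_mul_choose_div_nat
      have hodd2 : Odd (Nat.choose (n % 2) (k % 2) * Nat.choose (n / 2) (k / 2)) := by
        rw [Nat.odd_iff] at hodd ⊢
        rw [Nat.ModEq] at key
        omega
      rw [Nat.odd_mul] at hodd2
      obtain ⟨h1, h2⟩ := hodd2
      cases j with
      | zero =>
        simp only [Nat.testBit_zero] at hbit ⊢
        rw [decide_eq_true_eq] at hbit ⊢
        have hn2 : n % 2 < 2 := Nat.mod_lt _ (by norm_num)
        rw [Nat.odd_iff] at h1
        interval_cases h : (n % 2)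
        · rw [hbit] at h1; simp [Nat.choose] at h1
        · omega
      | succ j =>
        rw [Nat.testBit_succ] at hbit ⊢
        exact ih (n / 2) (by omega) (k / 2) h2 j hbit

lemma kummer_even {n k : ℕ} (h : ¬ (k &&& n = k)) : 2 ∣ Nat.choose n k := by
  rw [← even_iff_two_dvd]
  rw [← Nat.not_odd_iff_even]
  intro hodd
  apply h
  apply Nat.eq_of_testBit_eq
  intro j
  rw [Nat.testBit_and]
  rcases h2 : k.testBit j with h' | h'
  · simp
  · simp [kummer_aux n k hodd j h2]


lemma exists_move {n : ℕ} (A B : Finset (Fin n)) (hcard : A.card = B.card) :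
    ∃ e : Equiv.Perm (Fin n), (∀ x, x ∈ A ↔ e x ∈ B) ∧
      (∀ x y, x ∈ A → y ∈ A → (x < y ↔ e x < e y)) ∧
      (∀ x y, x ∉ A → y ∉ A → (x < y ↔ e x < e y)) := by
  classical
  have hA : A.card = B.card := hcard
  have hA' : Aᶜ.card = Bᶜ.card := by
    simp [Finset.card_compl, hcard]
  let f : ↥A ≃o ↥B := (A.orderIsoOfFin rfl).symm.trans (B.orderIsoOfFin hA.symm)
  let g : ↥(Aᶜ) ≃o ↥(Bᶜ) := ((Aᶜ).orderIsoOfFin rfl).symm.trans ((Bᶜ).orderIsoOfFin hA'.symm)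
  let cA : {x : Fin n // ¬ x ∈ A} ≃ ↥(Aᶜ) := Equiv.subtypeEquivRight (fun x => (Finset.mem_compl).symm)
  let cB : {x : Fin n // ¬ x ∈ B} ≃ ↥(Bᶜ) := Equiv.subtypeEquivRight (fun x => (Finset.mem_compl).symm)
  let e : Equiv.Perm (Fin n) :=
    ((Equiv.sumCompl (· ∈ A)).symm).trans ((Equiv.sumCongr f.toEquiv
      (cA.trans (g.toEquiv.trans cB.symm))).trans (Equiv.sumCompl (· ∈ B)))
  have heA : ∀ x (hx : x ∈ A), e x = (f ⟨x, hx⟩ : Fin n) := by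
    intro x hx
    simp only [e, Equiv.trans_apply, Equiv.sumCompl_symm_apply_of_pos hx,
      Equiv.sumCongr_apply, Sum.map_inl, Equiv.sumCompl_apply_inl]
    rfl
  have heA' : ∀ x (hx : x ∉ A), e x = (g ⟨x, Finset.mem_compl.mpr hx⟩ : Fin n) := by
    intro x hx
    simp only [e, Equiv.trans_apply, Equiv.sumCompl_symm_apply_of_neg hx,
      Equiv.sumCongr_apply, Sum.map_inr, Equiv.sumCompl_apply_inr]
    rfl
  refine ⟨e, ?_, ?_, ?_⟩
  · intro x
    constructor
    · intro hx; rw [heA x hx]; exact (f ⟨x, hx⟩).2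
    · intro hx
      by_contra hxa
      rw [heA' x hxa] at hx
      exact (Finset.mem_compl.mp (g ⟨x, _⟩).2) hx
  · intro x y hx hy
    rw [heA x hx, heA y hy, Subtype.coe_lt_coe, f.lt_iff_lt, Subtype.mk_lt_mk]
  · intro x y hx hy
    rw [heA' x hx, heA' y hy, Subtype.coe_lt_coe, g.lt_iff_lt, Subtype.mk_lt_mk]


def firstSet (n i : ℕ) (π : Equiv.Perm (Fin n)) : Finset (Fin n) :=
  Finset.univ.filter (fun x => ((π.symm x : Fin n) : ℕ) < i)

lemma firstSet_card (n i : ℕ) (hin : i ≤ n) (π : Equiv.Perm (Fin n)) :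
    (firstSet n i π).card = i := by
  rcases Nat.eq_or_lt_of_le hin with heq | hlt
  · have : firstSet n i π = Finset.univ := by
      ext x; simp only [firstSet, Finset.mem_filter, Finset.mem_univ, true_and, iff_true]
      exact heq ▸ (π.symm x).isLt
    rw [this, Finset.card_univ, Fintype.card_fin, heq]
  · have : firstSet n i π = Finset.image π (Finset.Iio (⟨i, hlt⟩ : Fin n)) := by
      ext x
      simp only [firstSet, Finset.mem_filter, Finset.mem_univ, true_and, Finset.mem_image,
        Finset.mem_Iio]
      constructor
      · intro hx; exact ⟨π.symm x, by rwa [Fin.lt_def], by simp⟩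
      · rintro ⟨p, hp, rfl⟩; rw [Fin.lt_def] at hp; simpa using hp
    rw [this, Finset.card_image_of_injective _ π.injective, Fin.card_Iio]

lemma firstSet_iff {n i : ℕ} {π : Equiv.Perm (Fin n)} {A : Finset (Fin n)} :
    firstSet n i π = A ↔ ∀ p : Fin n, ((p : ℕ) < i ↔ π p ∈ A) := by
  constructor
  · intro h p
    have := Finset.ext_iff.mp h (π p)
    simpa [firstSet] using this
  · intro h
    ext x
    have := h (π.symm x)
    simp only [Equiv.apply_symm_apply] at this
    simpa [firstSet] using this

lemma mapped_mem {n i : ℕ} {U : Finset ℕ} (hiU : i ∈ U)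
    {A B : Finset (Fin n)} {e : Equiv.Perm (Fin n)}
    (hmem : ∀ x, x ∈ A ↔ e x ∈ B)
    (hltA : ∀ x y, x ∈ A → y ∈ A → (x < y ↔ e x < e y))
    (hltC : ∀ x y, x ∉ A → y ∉ A → (x < y ↔ e x < e y))
    {π : Equiv.Perm (Fin n)} (hdesc : descSet n π ⊆ U) (hF : firstSet n i π = A) :
    descSet n (π.trans e) ⊆ U ∧ firstSet n i (π.trans e) = B := by
  have hmemA : ∀ p : Fin n, ((p : ℕ) < i ↔ π p ∈ A) := firstSet_iff.mp hF
  constructor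
  · intro j hj
    simp only [descSet, Finset.mem_filter] at hj
    obtain ⟨hjIcc, hjn, hjlt⟩ := hj
    simp only [Finset.mem_Icc] at hjIcc
    rcases lt_trichotomy j i with hji | rfl | hji
    · -- both positions j, j-1 are < i
      apply hdesc
      simp only [descSet, Finset.mem_filter, Finset.mem_Icc]
      refine ⟨by omega, hjn, ?_⟩
      have h1 : π ⟨j, hjn⟩ ∈ A := (hmemA ⟨j, hjn⟩).mp (by simpa using hji)
      have h2 : π ⟨j - 1, by omega⟩ ∈ A := (hmemA _).mp (by simp; omega)
      have := hltA _ _ h1 h2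
      simp only [Equiv.trans_apply] at hjlt
      exact this.mpr hjlt
    · exact hiU
    · -- both positions ≥ i
      apply hdesc
      simp only [descSet, Finset.mem_filter, Finset.mem_Icc]
      refine ⟨by omega, hjn, ?_⟩
      have h1 : π ⟨j, hjn⟩ ∉ A := fun h => by
        have := (hmemA ⟨j, hjn⟩).mpr h; simp at this; omega
      have h2 : π ⟨j - 1, by omega⟩ ∉ A := fun h => by
        have := (hmemA _).mpr h; simp at this; omega
      have := hltC _ _ h1 h2
      simp only [Equiv.trans_apply] at hjlt
      exact this.mpr hjlt
  · rw [firstSet_iff]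
    intro p
    rw [hmemA p, hmem (π p)]
    rfl

lemma descAlpha_even (n i : ℕ) (U : Finset ℕ) (hiU : i ∈ U) (h2 : i < n)
    (hch : 2 ∣ Nat.choose n i) : 2 ∣ descAlpha n U := by
  classical
  set P := Finset.univ.filter (fun π : Equiv.Perm (Fin n) => descSet n π ⊆ U) with hP
  have hmaps : ∀ π ∈ P, firstSet n i π ∈ Finset.powersetCard i (Finset.univ : Finset (Fin n)) := by
    intro π _
    rw [Finset.mem_powersetCard_univ]
    exact firstSet_card n i h2.le π
  have hsum := Finset.card_eq_sum_card_fiberwise hmaps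
  -- fibers all have equal cardinality
  have hfib : ∀ A B : Finset (Fin n), A.card = i → B.card = i →
      (P.filter (fun π => firstSet n i π = A)).card =
      (P.filter (fun π => firstSet n i π = B)).card := by
    intro A B hA hB
    obtain ⟨e, hmem, hltA, hltC⟩ := exists_move A B (hA.trans hB.symm)
    have hmem' : ∀ x, x ∈ B ↔ e.symm x ∈ A := by
      intro x
      rw [hmem (e.symm x), Equiv.apply_symm_apply]
    have hltA' : ∀ x y, x ∈ B → y ∈ B → (x < y ↔ e.symm x < e.symm y) := by
      intro x y hx hy
      simpa using (hltA _ _ ((hmem' x).mp hx) ((hmem' y).mp hy)).symm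
    have hltC' : ∀ x y, x ∉ B → y ∉ B → (x < y ↔ e.symm x < e.symm y) := by
      intro x y hx hy
      have hx' : e.symm x ∉ A := fun h => hx (by
        have := (hmem _).mp h; rwa [Equiv.apply_symm_apply] at this)
      have hy' : e.symm y ∉ A := fun h => hy (by
        have := (hmem _).mp h; rwa [Equiv.apply_symm_apply] at this)
      simpa using (hltC _ _ hx' hy').symm
    apply Finset.card_bij' (fun π _ => π.trans e) (fun π _ => π.trans e.symm)
    · intro π _
      ext x
      simp
    · intro π _
      ext x
      simp
    · intro π hπ
      simp only [Finset.mem_filter, hP, Finset.mem_univ, true_and] at hπ ⊢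
      exact mapped_mem hiU hmem hltA hltC hπ.1 hπ.2
    · intro π hπ
      simp only [Finset.mem_filter, hP, Finset.mem_univ, true_and] at hπ ⊢
      exact mapped_mem hiU hmem' hltA' hltC' hπ.1 hπ.2
  -- conclude
  have hne : (Finset.powersetCard i (Finset.univ : Finset (Fin n))).Nonempty := by
    rw [← Finset.card_pos, Finset.card_powersetCard, Finset.card_univ, Fintype.card_fin]
    exact Nat.choose_pos h2.le
  obtain ⟨A₀, hA₀⟩ := hne
  have hA₀c : A₀.card = i := Finset.mem_powersetCard_univ.mp hA₀
  have : descAlpha n U = (Finset.powersetCard i (Finset.univ : Finset (Fin n))).card *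
      (P.filter (fun π => firstSet n i π = A₀)).card := by
    rw [descAlpha, ← hP, hsum]
    rw [Finset.sum_congr rfl (fun A hA =>
      hfib A A₀ (Finset.mem_powersetCard_univ.mp hA) hA₀c), Finset.sum_const, smul_eq_mul]
  rw [this, Finset.card_powersetCard, Finset.card_univ, Fintype.card_fin]
  exact Dvd.dvd.mul_right hch _


lemma alpha_eq_sum (n : ℕ) (U : Finset ℕ) :
    descAlpha n U = ∑ T ∈ U.powerset, descBeta n T := by
  classical
  rw [descAlpha]
  rw [Finset.card_eq_sum_card_fiberwise (f := descSet n) (t := U.powerset)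
    (fun π hπ => Finset.mem_powerset.mpr (by simpa using hπ))]
  apply Finset.sum_congr rfl
  intro T hT
  rw [descBeta]
  congr 1
  ext π
  simp only [Finset.mem_filter, Finset.mem_univ, true_and]
  constructor
  · rintro ⟨_, h⟩; exact h
  · intro h; exact ⟨h ▸ Finset.mem_powerset.mp hT, h⟩

lemma key_even (n : ℕ) : ∀ m (S : Finset ℕ), S.card = m → ∀ i, i ∈ Finset.Icc 1 (n-1) →
    i ∉ S → ¬ (i &&& n = i) → 2 ∣ (descBeta n S + descBeta n (insert i S)) := by
  intro m
  induction m using Nat.strong_induction_on with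
  | _ m ih =>
    intro S hScard i hi hiS hband
    classical
    rw [Finset.mem_Icc] at hi
    have hlt : i < n := by omega
    have hdisj : Disjoint S.powerset (S.powerset.image (insert i)) := by
      rw [Finset.disjoint_left]
      intro T hT hT'
      obtain ⟨T', _, rfl⟩ := Finset.mem_image.mp hT'
      exact hiS (Finset.mem_powerset.mp hT (Finset.mem_insert_self i T'))
    have halpha : descAlpha n (insert i S) =
        ∑ T ∈ S.powerset, (descBeta n T + descBeta n (insert i T)) := by
      rw [alpha_eq_sum, Finset.powerset_insert, Finset.sum_union hdisj,
        Finset.sum_image ?hinj, ← Finset.sum_add_distrib]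
      case hinj =>
        intro T hT T' hT' heq
        have h1 : i ∉ T := fun h => hiS (Finset.mem_powerset.mp hT h)
        have h2 : i ∉ T' := fun h => hiS (Finset.mem_powerset.mp hT' h)
        rw [← Finset.erase_insert h1, ← Finset.erase_insert h2, heq]
    have heven : 2 ∣ descAlpha n (insert i S) :=
      descAlpha_even n i _ (Finset.mem_insert_self i S) hlt (kummer_even hband)
    rw [← Finset.add_sum_erase _ _ (Finset.mem_powerset_self S)] at halpha
    have hrest : 2 ∣ ∑ T ∈ S.powerset.erase S, (descBeta n T + descBeta n (insert i T)) := by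
      apply Finset.dvd_sum
      intro T hT
      obtain ⟨hne, hTp⟩ := Finset.mem_erase.mp hT
      have hsub : T ⊆ S := Finset.mem_powerset.mp hTp
      have hcard : T.card < m := hScard ▸ Finset.card_lt_card (lt_of_le_of_ne hsub hne)
      exact ih T.card hcard T rfl i (Finset.mem_Icc.mpr hi) (fun h => hiS (hsub h)) hband
    omega

/-- Adding a nonessential element to a descent set does not change the parity of `β_n`. -/
theorem stmt_4 (n : ℕ) (S : Finset ℕ) (hS : S ⊆ Finset.Icc 1 (n - 1))
    (i : ℕ) (hi : i ∈ Finset.Icc 1 (n - 1)) (hiS : i ∉ S) (hness : ¬ Essential n i) :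
    descBeta n S ≡ descBeta n (insert i S) [MOD 2] := by
  have hi' := Finset.mem_Icc.mp hi
  have hband : ¬ (i &&& n = i) := by
    intro h
    exact hness ⟨by omega, by omega, h⟩
  have := key_even n S.card S rfl i hi hiS hband
  unfold Nat.ModEq
  omega
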